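/- arXiv:1301.4605 — 4 statements merged into one kernel-verified Lean document; each statement's English description precedes it below -/
import Mathlib

section
/- If ρ₁₂₃ is a positive definite common extension of the compatible pair (ρ₁₂, ρ₂₃), i.e. Tr₃ ρ₁₂₃ = ρ₁₂ and Tr₁ ρ₁₂₃ = ρ₂₃, then there exists ε > 0 such that any other compatible pair (ρ̃₁₂, ρ̃₂₃) with Tr₁ ρ̃₁₂ = Tr₃ ρ̃₂₃ and ‖ρ₁₂ − ρ̃₁₂‖ + ‖ρ₂₃ − ρ̃₂₃‖ < ε also possesses a common extension. -/
open Matrix Kronecker BigOperators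
open scoped ComplexOrder
noncomputable section

/-- A density matrix: positive semidefinite with trace one. -/
def IsDensityMatrix {n : Type*} [Fintype n] (ρ : Matrix n n ℂ) : Prop :=
  ρ.PosSemidef ∧ ρ.trace = 1

/-- Partial trace over the second (right) tensor factor. -/
def ptraceRight {A B : Type*} [Fintype B] (ρ : Matrix (A × B) (A × B) ℂ) :
    Matrix A A ℂ :=
  Matrix.of fun x y => ∑ k, ρ (x, k) (y, k)

/-- Partial trace over the first (left) tensor factor. -/
def ptraceLeft {A B : Type*} [Fintype A] (ρ : Matrix (A × B) (A × B) ℂ) :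
    Matrix B B ℂ :=
  Matrix.of fun x y => ∑ k, ρ (k, x) (k, y)

/-- Partial trace over the first factor of a tripartite state indexed by `(A × B) × C`. -/
def ptrace1of3 {A B C : Type*} [Fintype A]
    (ρ : Matrix ((A × B) × C) ((A × B) × C) ℂ) : Matrix (B × C) (B × C) ℂ :=
  Matrix.of fun x y => ∑ j, ρ ((j, x.1), x.2) ((j, y.1), y.2)

/-- Partial trace over the first and third factors. -/
def ptrace13 {A B C : Type*} [Fintype A] [Fintype C]
    (ρ : Matrix ((A × B) × C) ((A × B) × C) ℂ) : Matrix B B ℂ :=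
  Matrix.of fun x y => ∑ j, ∑ k, ρ ((j, x), k) ((j, y), k)

/-- The von Neumann entropy `S(ρ) = -Tr (ρ log ρ)`, computed via eigenvalues. -/
def vnEntropy {n : Type*} [Fintype n] [DecidableEq n] (ρ : Matrix n n ℂ) : ℝ :=
  if h : ρ.IsHermitian then -∑ i, h.eigenvalues i * Real.log (h.eigenvalues i) else 0

/-- A fixed norm on matrices (entrywise ℓ¹ norm). -/
def mnorm {n : Type*} [Fintype n] (M : Matrix n n ℂ) : ℝ :=
  ∑ i, ∑ j, ‖M i j‖


section Helpers
lemma mnorm_nonneg {n : Type*} [Fintype n] (M : Matrix n n ℂ) : 0 ≤ mnorm M := by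
  refine Finset.sum_nonneg fun i _ => Finset.sum_nonneg fun j _ => ?_
  exact norm_nonneg _

/-- L1: shift a positive definite matrix down. -/
lemma posdef_shift {n : Type*} [Fintype n] [DecidableEq n] {M : Matrix n n ℂ}
    (hM : M.PosDef) : ∃ c : ℝ, 0 < c ∧ (M - (c : ℂ) • 1).PosSemidef := by
  rcases isEmpty_or_nonempty n with hn | hn
  · refine ⟨1, one_pos, ?_⟩
    have : M - ((1 : ℝ) : ℂ) • 1 = 0 := by ext i; exact absurd trivial (hn.elim i)
    rw [this]; exact Matrix.PosSemidef.zero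
  have hH : M.IsHermitian := hM.1
  set c : ℝ := Finset.univ.inf' Finset.univ_nonempty hH.eigenvalues with hc
  refine ⟨c, ?_, ?_⟩
  · rw [Finset.lt_inf'_iff]
    intro i _
    exact hM.eigenvalues_pos i
  · have hcle : ∀ i, c ≤ hH.eigenvalues i := fun i =>
      Finset.inf'_le _ (Finset.mem_univ i)
    set U : Matrix n n ℂ := (hH.eigenvectorUnitary : Matrix n n ℂ) with hU
    have hUU : U * star U = 1 := (Matrix.mem_unitaryGroup_iff).mp hH.eigenvectorUnitary.2
    have key : M - (c : ℂ) • 1 =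
        U * Matrix.diagonal (fun i => ((hH.eigenvalues i - c : ℝ) : ℂ)) * Uᴴ := by
      conv_lhs => rw [hH.spectral_theorem, Unitary.conjStarAlgAut_apply]
      have h1 : (c : ℂ) • (1 : Matrix n n ℂ) = U * ((c : ℂ) • 1) * star U := by
        rw [Matrix.mul_smul, Matrix.smul_mul, mul_one, hUU]
      rw [h1, ← Matrix.sub_mul, ← Matrix.mul_sub, Matrix.star_eq_conjTranspose]
      congr 2
      rw [Matrix.smul_one_eq_diagonal, Matrix.diagonal_sub]
      congr 1
      funext i
      push_cast
      simp
    rw [key]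
    exact Matrix.PosSemidef.mul_mul_conjTranspose_same
      (Matrix.posSemidef_diagonal_iff.mpr fun i => by
        rw [Complex.zero_le_real]; linarith [hcle i]) U

/-- L2: small Hermitian perturbation of c•1 is PSD. -/
lemma smul_one_add_posSemidef {n : Type*} [Fintype n] [DecidableEq n]
    {E : Matrix n n ℂ} {c : ℝ} (hE : E.IsHermitian) (hc : mnorm E ≤ c) :
    ((c : ℂ) • 1 + E).PosSemidef := by
  have hH : ((c : ℂ) • 1 + E).IsHermitian := by
    refine Matrix.IsHermitian.add ?_ hE
    rw [Matrix.IsHermitian, Matrix.conjTranspose_smul, Matrix.conjTranspose_one]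
    simp [Complex.star_def]
  refine Matrix.PosSemidef.of_dotProduct_mulVec_nonneg hH fun x => ?_
  set S : ℝ := ∑ i, Complex.normSq (x i) with hS
  have hS0 : 0 ≤ S := Finset.sum_nonneg fun i _ => Complex.normSq_nonneg _
  have hxx : ∀ i j, ‖x i‖ * ‖x j‖ ≤ S := by
    intro i j
    have h1 : ∀ k, Complex.normSq (x k) ≤ S := fun k =>
      Finset.single_le_sum (fun l _ => Complex.normSq_nonneg (x l)) (Finset.mem_univ k)
    rcases le_total (‖x i‖) (‖x j‖) with h | h
    · calc ‖x i‖ * ‖x j‖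
          ≤ ‖x j‖ * ‖x j‖ :=
            mul_le_mul_of_nonneg_right h (norm_nonneg _)
        _ = Complex.normSq (x j) := by rw [Complex.normSq_eq_norm_sq]; ring
        _ ≤ S := h1 j
    · calc ‖x i‖ * ‖x j‖
          ≤ ‖x i‖ * ‖x i‖ :=
            mul_le_mul_of_nonneg_left h (norm_nonneg _)
        _ = Complex.normSq (x i) := by rw [Complex.normSq_eq_norm_sq]; ring
        _ ≤ S := h1 i
  set t : ℂ := star x ⬝ᵥ E *ᵥ x with ht
  have habs : ‖t‖ ≤ mnorm E * S := by
    have : t = ∑ i, ∑ j, (starRingEnd ℂ) (x i) * E i j * x j := by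
      simp [ht, dotProduct, Matrix.mulVec, Finset.mul_sum, mul_assoc]
    rw [this]
    calc ‖∑ i, ∑ j, (starRingEnd ℂ) (x i) * E i j * x j‖
        ≤ ∑ i, ∑ j, ‖(starRingEnd ℂ) (x i) * E i j * x j‖ := by
          refine le_trans (norm_sum_le _ _) (Finset.sum_le_sum fun i _ => ?_)
          exact norm_sum_le _ _
      _ ≤ ∑ i, ∑ j, ‖E i j‖ * S := ?_
      _ = mnorm E * S := by rw [mnorm, Finset.sum_mul]; simp [Finset.sum_mul]
    · refine Finset.sum_le_sum fun i _ => Finset.sum_le_sum fun j _ => ?_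
      rw [norm_mul, norm_mul, Complex.norm_conj]
      calc ‖x i‖ * ‖E i j‖ * ‖x j‖
          = ‖E i j‖ * (‖x i‖ * ‖x j‖) := by ring
        _ ≤ ‖E i j‖ * S :=
            mul_le_mul_of_nonneg_left (hxx i j) (norm_nonneg _)
  have htconj : (starRingEnd ℂ) t = t := by
    rw [ht]
    conv_rhs => rw [Matrix.star_dotProduct]
    rw [starRingEnd_apply]
    congr 1
    rw [Matrix.star_mulVec, ← Matrix.dotProduct_mulVec, hE.eq]
  have hdx : star x ⬝ᵥ x = (S : ℂ) := by
    rw [hS]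
    push_cast
    refine Finset.sum_congr rfl fun i _ => ?_
    simp [Complex.normSq_eq_conj_mul_self, Complex.star_def]
  rw [Matrix.add_mulVec, Matrix.smul_mulVec, Matrix.one_mulVec, dotProduct_add,
    dotProduct_smul, ← ht, hdx, Complex.nonneg_iff]
  have htre : -‖t‖ ≤ t.re := by
    have := Complex.abs_re_le_norm t
    rw [abs_le] at this
    linarith [this.1]
  constructor
  · have h1 : mnorm E * S ≤ c * S := mul_le_mul_of_nonneg_right hc hS0
    simp only [smul_eq_mul, Complex.add_re, Complex.mul_re, Complex.ofReal_re,
      Complex.ofReal_im, mul_zero, sub_zero, zero_mul]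
    nlinarith [htre, habs]
  · have him : t.im = 0 := Complex.conj_eq_iff_im.mp htconj
    simp [smul_eq_mul, Complex.add_im, Complex.mul_im, him]

lemma ptraceLeft_sub {A B : Type*} [Fintype A] [Fintype B]
    (M N : Matrix (A × B) (A × B) ℂ) :
    ptraceLeft (M - N) = ptraceLeft M - ptraceLeft N := by
  ext b b'
  simp [ptraceLeft, Finset.sum_sub_distrib]

lemma ptraceRight_sub {A B : Type*} [Fintype A] [Fintype B]
    (M N : Matrix (A × B) (A × B) ℂ) :
    ptraceRight (M - N) = ptraceRight M - ptraceRight N := by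
  ext b b'
  simp [ptraceRight, Finset.sum_sub_distrib]

lemma ptraceRight_add3 {A B C : Type*} [Fintype A] [Fintype B] [Fintype C]
    (M N : Matrix ((A × B) × C) ((A × B) × C) ℂ) :
    ptraceRight (M + N) = ptraceRight M + ptraceRight N := by
  ext p q
  simp [ptraceRight, Finset.sum_add_distrib]

lemma ptrace1of3_add {A B C : Type*} [Fintype A] [Fintype B] [Fintype C]
    (M N : Matrix ((A × B) × C) ((A × B) × C) ℂ) :
    ptrace1of3 (M + N) = ptrace1of3 M + ptrace1of3 N := by
  ext p q
  simp [ptrace1of3, Finset.sum_add_distrib]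

lemma trace_ptraceRight {A B : Type*} [Fintype A] [Fintype B]
    (M : Matrix (A × B) (A × B) ℂ) :
    (ptraceRight M).trace = M.trace := by
  simp [Matrix.trace, ptraceRight, Matrix.diag, Fintype.sum_prod_type]

end Helpers

/-- If the compatible pair (ρ₁₂, ρ₂₃) has a positive definite common extension, then every
compatible pair sufficiently close to it also has a common extension. -/
theorem stmt2 {A B C : Type*} [Fintype A] [Fintype B] [Fintype C]
    (ρ₁₂₃ : Matrix ((A × B) × C) ((A × B) × C) ℂ)
    (ρ₁₂ : Matrix (A × B) (A × B) ℂ) (ρ₂₃ : Matrix (B × C) (B × C) ℂ)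
    (h123 : IsDensityMatrix ρ₁₂₃) (hpd : ρ₁₂₃.PosDef)
    (h12 : IsDensityMatrix ρ₁₂) (h23 : IsDensityMatrix ρ₂₃)
    (hm12 : ptraceRight ρ₁₂₃ = ρ₁₂) (hm23 : ptrace1of3 ρ₁₂₃ = ρ₂₃) :
    ∃ ε > 0, ∀ (σ₁₂ : Matrix (A × B) (A × B) ℂ) (σ₂₃ : Matrix (B × C) (B × C) ℂ),
      IsDensityMatrix σ₁₂ → IsDensityMatrix σ₂₃ →
      ptraceLeft σ₁₂ = ptraceRight σ₂₃ →
      mnorm (ρ₁₂ - σ₁₂) + mnorm (ρ₂₃ - σ₂₃) < ε →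
      ∃ σ₁₂₃ : Matrix ((A × B) × C) ((A × B) × C) ℂ,
        IsDensityMatrix σ₁₂₃ ∧ ptraceRight σ₁₂₃ = σ₁₂ ∧ ptrace1of3 σ₁₂₃ = σ₂₃ := by
  classical
  haveI hAne : Nonempty A := by
    by_contra h
    rw [not_nonempty_iff] at h
    have ht := h123.2
    rw [Matrix.trace] at ht
    simp [Matrix.diag] at ht
  haveI hCne : Nonempty C := by
    by_contra h
    rw [not_nonempty_iff] at h
    have ht := h123.2
    rw [Matrix.trace] at ht
    simp [Matrix.diag] at ht
  obtain ⟨c, hc0, hshift⟩ := posdef_shift hpd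
  refine ⟨c / 2, by positivity, ?_⟩
  intro σ₁₂ σ₂₃ hσ12 hσ23 hmid hclose
  set cA : ℂ := ((Fintype.card A : ℂ))⁻¹ with hcA
  set cC : ℂ := ((Fintype.card C : ℂ))⁻¹ with hcC
  set rA : ℝ := ((Fintype.card A : ℝ))⁻¹ with hrA
  set rC : ℝ := ((Fintype.card C : ℝ))⁻¹ with hrC
  have hcardA : ((Fintype.card A : ℂ)) ≠ 0 := Nat.cast_ne_zero.mpr Fintype.card_ne_zero
  have hcardC : ((Fintype.card C : ℂ)) ≠ 0 := Nat.cast_ne_zero.mpr Fintype.card_ne_zero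
  have honeA : (Fintype.card A : ℂ) * cA = 1 := mul_inv_cancel₀ hcardA
  have honeC : (Fintype.card C : ℂ) * cC = 1 := mul_inv_cancel₀ hcardC
  set Δ12 : Matrix (A × B) (A × B) ℂ := σ₁₂ - ρ₁₂ with hΔ12
  set Δ23 : Matrix (B × C) (B × C) ℂ := σ₂₃ - ρ₂₃ with hΔ23
  set Δ2 : Matrix B B ℂ := ptraceLeft Δ12 with hΔ2def
  have hΔ12H : Δ12.IsHermitian := hσ12.1.1.sub h12.1.1
  have hΔ23H : Δ23.IsHermitian := hσ23.1.1.sub h23.1.1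
  -- middle marginal compatibility for the ρ pair
  have f1 : ptraceLeft ρ₁₂ = ptraceRight ρ₂₃ := by
    rw [← hm12, ← hm23]
    ext b b'
    simp only [ptraceLeft, ptraceRight, ptrace1of3, Matrix.of_apply]
    rw [Finset.sum_comm]
  have hmidΔ : ptraceRight Δ23 = Δ2 := by
    rw [hΔ2def, hΔ12, hΔ23, ptraceRight_sub, ptraceLeft_sub, hmid, f1]
  have hΔ2H : ∀ b b', (starRingEnd ℂ) (Δ2 b' b) = Δ2 b b' := by
    intro b b'
    simp only [hΔ2def, ptraceLeft, Matrix.of_apply, map_sum]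
    exact Finset.sum_congr rfl fun a _ => hΔ12H.apply _ _
  -- the correction matrix
  set E : Matrix ((A × B) × C) ((A × B) × C) ℂ := Matrix.of fun p q =>
    Δ12 p.1 q.1 * (if p.2 = q.2 then cC else 0)
    + (if p.1.1 = q.1.1 then cA else 0) * Δ23 (p.1.2, p.2) (q.1.2, q.2)
    - (if p.1.1 = q.1.1 then cA else 0) * Δ2 p.1.2 q.1.2 * (if p.2 = q.2 then cC else 0)
    with hE
  -- marginals of E
  have hEm1 : ptraceRight E = Δ12 := by
    ext u v
    simp only [ptraceRight, Matrix.of_apply, hE, eq_self_iff_true, if_true]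
    have e1 : ∑ k : C, Δ12 u v * cC = Δ12 u v * ((Fintype.card C : ℂ) * cC) := by
      rw [Finset.sum_const, Finset.card_univ, nsmul_eq_mul]; ring
    have e2 : ∑ k : C, (if u.1 = v.1 then cA else 0) * Δ23 (u.2, k) (v.2, k)
        = (if u.1 = v.1 then cA else 0) * Δ2 u.2 v.2 := by
      rw [← Finset.mul_sum]
      congr 1
      rw [← hmidΔ]
      rfl
    have e3 : ∑ k : C, (if u.1 = v.1 then cA else 0) * Δ2 u.2 v.2 * cC
        = (if u.1 = v.1 then cA else 0) * Δ2 u.2 v.2 * ((Fintype.card C : ℂ) * cC) := by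
      rw [Finset.sum_const, Finset.card_univ, nsmul_eq_mul]; ring
    rw [Finset.sum_sub_distrib, Finset.sum_add_distrib, e1, e2, e3, honeC]
    ring
  have hEm2 : ptrace1of3 E = Δ23 := by
    ext u v
    simp only [ptrace1of3, Matrix.of_apply, hE, eq_self_iff_true, if_true]
    rw [Finset.sum_sub_distrib, Finset.sum_add_distrib]
    have e1 : ∑ j : A, Δ12 (j, u.1) (j, v.1) * (if u.2 = v.2 then cC else 0)
        = Δ2 u.1 v.1 * (if u.2 = v.2 then cC else 0) := by
      rw [← Finset.sum_mul]
      rfl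
    have e2 : ∑ j : A, cA * Δ23 (u.1, u.2) (v.1, v.2)
        = ((Fintype.card A : ℂ) * cA) * Δ23 (u.1, u.2) (v.1, v.2) := by
      rw [Finset.sum_const, Finset.card_univ, nsmul_eq_mul]; ring
    have e3 : ∑ j : A, cA * Δ2 u.1 v.1 * (if u.2 = v.2 then cC else 0)
        = ((Fintype.card A : ℂ) * cA) * Δ2 u.1 v.1 * (if u.2 = v.2 then cC else 0) := by
      rw [Finset.sum_const, Finset.card_univ, nsmul_eq_mul]; ring
    rw [e1, e2, e3, honeA]
    simp
  -- E is Hermitian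
  have hstarA : (starRingEnd ℂ) cA = cA := by
    simp [hcA]
  have hstarC : (starRingEnd ℂ) cC = cC := by
    simp [hcC]
  have hEH : E.IsHermitian := by
    rw [Matrix.IsHermitian]
    ext p q
    simp only [Matrix.conjTranspose_apply, Matrix.of_apply, hE]
    have h1 : ∀ x y : C, ((if x = y then cC else 0) : ℂ) = (if y = x then cC else 0) := by
      intro x y
      by_cases h : x = y
      · simp [h]
      · simp [h, Ne.symm h]
    have h2 : ∀ x y : A, ((if x = y then cA else 0) : ℂ) = (if y = x then cA else 0) := by
      intro x y
      by_cases h : x = y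
      · simp [h]
      · simp [h, Ne.symm h]
    rw [Complex.star_def, _root_.map_sub, _root_.map_add, _root_.map_mul, _root_.map_mul, _root_.map_mul, _root_.map_mul]
    rw [show ((starRingEnd ℂ) (Δ12 q.1 p.1)) = Δ12 p.1 q.1 from hΔ12H.apply _ _, show ((starRingEnd ℂ) (Δ23 (q.1.2, q.2) (p.1.2, p.2))) = Δ23 (p.1.2, p.2) (q.1.2, q.2) from hΔ23H.apply _ _, hΔ2H]
    have h3 : (starRingEnd ℂ) (if q.2 = p.2 then cC else 0) = (if p.2 = q.2 then cC else 0) := by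
      rw [h1]
      by_cases h : p.2 = q.2 <;> simp [h, hstarC]
    have h4 : (starRingEnd ℂ) (if q.1.1 = p.1.1 then cA else 0) = (if p.1.1 = q.1.1 then cA else 0) := by
      rw [h2]
      by_cases h : p.1.1 = q.1.1 <;> simp [h, hstarA]
    rw [h3, h4]
  -- norm bound on E
  have hΔ2n : (∑ b, ∑ b', ‖Δ2 b b'‖) ≤ mnorm Δ12 := by
    calc ∑ b, ∑ b', ‖Δ2 b b'‖
        ≤ ∑ b, ∑ b', ∑ a, ‖Δ12 (a, b) (a, b')‖ := by
          refine Finset.sum_le_sum fun b _ => Finset.sum_le_sum fun b' _ => ?_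
          exact norm_sum_le _ _
      _ = ∑ a, ∑ b, ∑ b', ‖Δ12 (a, b) (a, b')‖ := by
          rw [show (∑ b, ∑ b', ∑ a, ‖Δ12 (a, b) (a, b')‖)
              = ∑ b, ∑ a, ∑ b', ‖Δ12 (a, b) (a, b')‖ from
            Finset.sum_congr rfl fun b _ => Finset.sum_comm]
          exact Finset.sum_comm
      _ ≤ ∑ a, ∑ b, ∑ a', ∑ b', ‖Δ12 (a, b) (a', b')‖ := by
          refine Finset.sum_le_sum fun a _ => Finset.sum_le_sum fun b _ => ?_
          exact Finset.single_le_sum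
            (f := fun a' => ∑ b', ‖Δ12 (a, b) (a', b')‖)
            (fun a' _ => Finset.sum_nonneg fun _ _ => norm_nonneg _)
            (Finset.mem_univ a)
      _ = mnorm Δ12 := by simp [mnorm, Fintype.sum_prod_type]
  have hcardA' : ((Fintype.card A : ℝ)) ≠ 0 := Nat.cast_ne_zero.mpr Fintype.card_ne_zero
  have hcardC' : ((Fintype.card C : ℝ)) ≠ 0 := Nat.cast_ne_zero.mpr Fintype.card_ne_zero
  have hcCabs : ‖cC‖ = rC := by
    rw [hcC, hrC, norm_inv, Complex.norm_natCast]
  have hcAabs : ‖cA‖ = rA := by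
    rw [hcA, hrA, norm_inv, Complex.norm_natCast]
  have hmE : mnorm E ≤ c := by
    have hpt : ∀ p q : (A × B) × C, ‖E p q‖ ≤
        ‖Δ12 p.1 q.1‖ * (if p.2 = q.2 then rC else 0)
        + (if p.1.1 = q.1.1 then rA else 0) * ‖Δ23 (p.1.2, p.2) (q.1.2, q.2)‖
        + (if p.1.1 = q.1.1 then rA else 0) *
            (‖Δ2 p.1.2 q.1.2‖ * (if p.2 = q.2 then rC else 0)) := by
      intro p q
      have hEpq : E p q = Δ12 p.1 q.1 * (if p.2 = q.2 then cC else 0)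
          + (if p.1.1 = q.1.1 then cA else 0) * Δ23 (p.1.2, p.2) (q.1.2, q.2)
          - (if p.1.1 = q.1.1 then cA else 0) * Δ2 p.1.2 q.1.2 * (if p.2 = q.2 then cC else 0) := by
        rw [hE]; rfl
      have h1 : ‖Δ12 p.1 q.1 * (if p.2 = q.2 then cC else 0)‖
          = ‖Δ12 p.1 q.1‖ * (if p.2 = q.2 then rC else 0) := by
        rw [norm_mul]; congr 1
        by_cases h : p.2 = q.2 <;> simp [h, hcCabs]
      have h2 : ‖(if p.1.1 = q.1.1 then cA else 0) * Δ23 (p.1.2, p.2) (q.1.2, q.2)‖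
          = (if p.1.1 = q.1.1 then rA else 0) * ‖Δ23 (p.1.2, p.2) (q.1.2, q.2)‖ := by
        rw [norm_mul]; congr 1
        by_cases h : p.1.1 = q.1.1 <;> simp [h, hcAabs]
      have h3 : ‖(if p.1.1 = q.1.1 then cA else 0) * Δ2 p.1.2 q.1.2 * (if p.2 = q.2 then cC else 0)‖
          = (if p.1.1 = q.1.1 then rA else 0) *
              (‖Δ2 p.1.2 q.1.2‖ * (if p.2 = q.2 then rC else 0)) := by
        rw [norm_mul, norm_mul, mul_assoc]; congr 1
        · by_cases h : p.1.1 = q.1.1 <;> simp [h, hcAabs]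
        · congr 1
          by_cases h : p.2 = q.2 <;> simp [h, hcCabs]
      rw [hEpq]
      calc ‖Δ12 p.1 q.1 * (if p.2 = q.2 then cC else 0)
              + (if p.1.1 = q.1.1 then cA else 0) * Δ23 (p.1.2, p.2) (q.1.2, q.2)
              - (if p.1.1 = q.1.1 then cA else 0) * Δ2 p.1.2 q.1.2 * (if p.2 = q.2 then cC else 0)‖
          ≤ ‖Δ12 p.1 q.1 * (if p.2 = q.2 then cC else 0)
              + (if p.1.1 = q.1.1 then cA else 0) * Δ23 (p.1.2, p.2) (q.1.2, q.2)‖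
            + ‖(if p.1.1 = q.1.1 then cA else 0) * Δ2 p.1.2 q.1.2 * (if p.2 = q.2 then cC else 0)‖ := by
            rw [sub_eq_add_neg]
            refine (norm_add_le _ _).trans_eq ?_
            rw [norm_neg]
        _ ≤ ‖Δ12 p.1 q.1 * (if p.2 = q.2 then cC else 0)‖
            + ‖(if p.1.1 = q.1.1 then cA else 0) * Δ23 (p.1.2, p.2) (q.1.2, q.2)‖
            + ‖(if p.1.1 = q.1.1 then cA else 0) * Δ2 p.1.2 q.1.2 * (if p.2 = q.2 then cC else 0)‖ :=
            add_le_add_left (norm_add_le _ _) _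
        _ = _ := by rw [h1, h2, h3]
    have hsum : mnorm E ≤
        (∑ p : (A × B) × C, ∑ q : (A × B) × C,
          ‖Δ12 p.1 q.1‖ * (if p.2 = q.2 then rC else 0))
        + (∑ p : (A × B) × C, ∑ q : (A × B) × C,
          (if p.1.1 = q.1.1 then rA else 0) * ‖Δ23 (p.1.2, p.2) (q.1.2, q.2)‖)
        + (∑ p : (A × B) × C, ∑ q : (A × B) × C,
          (if p.1.1 = q.1.1 then rA else 0) *
            (‖Δ2 p.1.2 q.1.2‖ * (if p.2 = q.2 then rC else 0))) := by
      rw [mnorm]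
      calc ∑ p : (A × B) × C, ∑ q : (A × B) × C, ‖E p q‖
          ≤ ∑ p : (A × B) × C, ∑ q : (A × B) × C,
            (‖Δ12 p.1 q.1‖ * (if p.2 = q.2 then rC else 0)
            + (if p.1.1 = q.1.1 then rA else 0) * ‖Δ23 (p.1.2, p.2) (q.1.2, q.2)‖
            + (if p.1.1 = q.1.1 then rA else 0) *
                (‖Δ2 p.1.2 q.1.2‖ * (if p.2 = q.2 then rC else 0))) :=
            Finset.sum_le_sum fun p _ => Finset.sum_le_sum fun q _ => hpt p q
        _ = _ := by simp only [Finset.sum_add_distrib]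
    have hT1 : (∑ p : (A × B) × C, ∑ q : (A × B) × C,
        ‖Δ12 p.1 q.1‖ * (if p.2 = q.2 then rC else 0)) = mnorm Δ12 := by
      simp only [Fintype.sum_prod_type, mul_ite, mul_zero, Finset.sum_ite_eq,
        Finset.mem_univ, if_true, Finset.sum_const, Finset.card_univ, nsmul_eq_mul]
      simp only [mnorm, Fintype.sum_prod_type, ← Finset.sum_mul]
      refine Finset.sum_congr rfl fun x _ => Finset.sum_congr rfl fun y _ => ?_
      rw [hrC]
      field_simp
    have hT2 : (∑ p : (A × B) × C, ∑ q : (A × B) × C,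
        (if p.1.1 = q.1.1 then rA else 0) * ‖Δ23 (p.1.2, p.2) (q.1.2, q.2)‖)
        = mnorm Δ23 := by
      simp only [Fintype.sum_prod_type, ite_mul, zero_mul, Finset.sum_ite_irrel,
        Finset.sum_const_zero, Finset.sum_ite_eq, Finset.mem_univ, if_true,
        Finset.sum_const, Finset.card_univ, nsmul_eq_mul]
      simp only [mnorm, Fintype.sum_prod_type, ← Finset.mul_sum]
      rw [hrA]
      field_simp
    have hT3 : (∑ p : (A × B) × C, ∑ q : (A × B) × C,
        (if p.1.1 = q.1.1 then rA else 0) *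
          (‖Δ2 p.1.2 q.1.2‖ * (if p.2 = q.2 then rC else 0)))
        ≤ mnorm Δ12 := by
      have heq : (∑ p : (A × B) × C, ∑ q : (A × B) × C,
          (if p.1.1 = q.1.1 then rA else 0) *
            (‖Δ2 p.1.2 q.1.2‖ * (if p.2 = q.2 then rC else 0)))
          = ∑ b, ∑ b', ‖Δ2 b b'‖ := by
        simp only [Fintype.sum_prod_type, mul_ite, mul_zero, ite_mul, zero_mul,
          Finset.sum_ite_irrel, Finset.sum_const_zero, Finset.sum_ite_eq,
          Finset.mem_univ, if_true, Finset.sum_const, Finset.card_univ, nsmul_eq_mul]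
        simp only [← Finset.mul_sum, ← Finset.sum_mul]
        rw [hrA, hrC]
        field_simp
      rw [heq]
      exact hΔ2n
    have hsub12 : mnorm Δ12 = mnorm (ρ₁₂ - σ₁₂) := by
      rw [hΔ12]
      unfold mnorm
      refine Finset.sum_congr rfl fun i _ => Finset.sum_congr rfl fun j _ => ?_
      rw [Matrix.sub_apply, Matrix.sub_apply]
      exact norm_sub_rev _ _
    have hsub23 : mnorm Δ23 = mnorm (ρ₂₃ - σ₂₃) := by
      rw [hΔ23]
      unfold mnorm
      refine Finset.sum_congr rfl fun i _ => Finset.sum_congr rfl fun j _ => ?_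
      rw [Matrix.sub_apply, Matrix.sub_apply]
      exact norm_sub_rev _ _
    have hn1 : 0 ≤ mnorm (ρ₁₂ - σ₁₂) := mnorm_nonneg _
    have hn2 : 0 ≤ mnorm (ρ₂₃ - σ₂₃) := mnorm_nonneg _
    rw [hT1, hT2] at hsum
    linarith [hsum, hT3, hΔ2n]
  -- assemble
  refine ⟨ρ₁₂₃ + E, ⟨?_, ?_⟩, ?_, ?_⟩
  · have : ρ₁₂₃ + E = (ρ₁₂₃ - (c : ℂ) • 1) + ((c : ℂ) • 1 + E) := by abel
    rw [this]
    exact hshift.add (smul_one_add_posSemidef hEH hmE)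
  · have h1 : ptraceRight (ρ₁₂₃ + E) = σ₁₂ := by
      rw [ptraceRight_add3, hm12, hEm1, hΔ12]; abel
    rw [← trace_ptraceRight, h1]
    exact hσ12.2
  · rw [ptraceRight_add3, hm12, hEm1, hΔ12]; abel
  · rw [ptrace1of3_add, hm23, hEm2, hΔ23]; abel
end
end

section
/- Let ρ₂ be a rank-2 density matrix on ℂ² with distinct eigenvalues μ₁ > μ₂ > 0 and let φ₁ be a unit vector that is not an eigenvector of ρ₂. Then there exist ν₁, ν₂ > 0 and a unit vector φ₂ such that ρ₂ = ν₁|φ₁⟩⟨φ₁| + ν₂|φ₂⟩⟨φ₂|, and φ₂ is not proportional to φ₁ and is not an eigenvector of ρ₂. -/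
open Matrix Kronecker BigOperators
open ComplexConjugate
open scoped ComplexOrder
noncomputable section

/-- For a rank-2 density matrix on ℂ² with distinct eigenvalues and a unit vector φ₁ that is
not an eigenvector, there is a decomposition ρ = ν₁|φ₁⟩⟨φ₁| + ν₂|φ₂⟩⟨φ₂| with φ₂ not
proportional to φ₁ and not an eigenvector. -/
theorem stmt9 (ρ : Matrix (Fin 2) (Fin 2) ℂ) (hρ : IsDensityMatrix ρ)
    (ψ₁ ψ₂ : Fin 2 → ℂ) (μ₁ μ₂ : ℝ)
    (hψ₁ : star ψ₁ ⬝ᵥ ψ₁ = 1) (hψ₂ : star ψ₂ ⬝ᵥ ψ₂ = 1) (hψo : star ψ₁ ⬝ᵥ ψ₂ = 0)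
    (hμ : μ₁ > μ₂) (hμ₂ : 0 < μ₂)
    (hdec : ρ = (μ₁ : ℂ) • Matrix.vecMulVec ψ₁ (star ψ₁)
              + (μ₂ : ℂ) • Matrix.vecMulVec ψ₂ (star ψ₂))
    (φ₁ : Fin 2 → ℂ) (hφ₁ : star φ₁ ⬝ᵥ φ₁ = 1)
    (hφ₁ne : ¬ ∃ c : ℂ, ρ.mulVec φ₁ = c • φ₁) :
    ∃ (ν₁ ν₂ : ℝ) (φ₂ : Fin 2 → ℂ),
      0 < ν₁ ∧ 0 < ν₂ ∧ star φ₂ ⬝ᵥ φ₂ = 1 ∧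
      ρ = (ν₁ : ℂ) • Matrix.vecMulVec φ₁ (star φ₁)
          + (ν₂ : ℂ) • Matrix.vecMulVec φ₂ (star φ₂) ∧
      (¬ ∃ c : ℂ, φ₂ = c • φ₁) ∧
      (¬ ∃ c : ℂ, ρ.mulVec φ₂ = c • φ₂) := by
  classical
  have hμ₁pos : 0 < μ₁ := lt_trans hμ₂ hμ
  -- expanded orthonormality relations
  have e1 : conj (ψ₁ 0) * ψ₁ 0 + conj (ψ₁ 1) * ψ₁ 1 = 1 := by
    simpa [dotProduct, Fin.sum_univ_two, Complex.star_def] using hψ₁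
  have e2 : conj (ψ₂ 0) * ψ₂ 0 + conj (ψ₂ 1) * ψ₂ 1 = 1 := by
    simpa [dotProduct, Fin.sum_univ_two, Complex.star_def] using hψ₂
  have e3 : conj (ψ₁ 0) * ψ₂ 0 + conj (ψ₁ 1) * ψ₂ 1 = 0 := by
    simpa [dotProduct, Fin.sum_univ_two, Complex.star_def] using hψo
  have e4 : conj (ψ₂ 0) * ψ₁ 0 + conj (ψ₂ 1) * ψ₁ 1 = 0 := by
    have h := congrArg conj e3
    simp only [map_add, _root_.map_mul, Complex.conj_conj, map_zero] at h
    linear_combination h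
  -- completeness of the basis
  set U : Matrix (Fin 2) (Fin 2) ℂ := Matrix.of (fun i j => if j = 0 then ψ₁ i else ψ₂ i)
    with hUdef
  have hU : Uᴴ * U = 1 := by
    ext j k
    fin_cases j <;> fin_cases k <;>
      simp [hUdef, Matrix.mul_apply, Matrix.conjTranspose_apply, Fin.sum_univ_two,
        Matrix.one_apply, Complex.star_def] <;>
      first
      | linear_combination e1
      | linear_combination e2
      | linear_combination e3
      | linear_combination e4
  have hU2 : U * Uᴴ = 1 := mul_eq_one_comm.mp hU
  have hcompl : ∀ i j : Fin 2,
      ψ₁ i * conj (ψ₁ j) + ψ₂ i * conj (ψ₂ j) = if i = j then 1 else 0 := by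
    intro i j
    have h := congrFun (congrFun hU2 i) j
    simpa [hUdef, Matrix.mul_apply, Matrix.conjTranspose_apply, Fin.sum_univ_two,
      Matrix.one_apply, Complex.star_def] using h
  set a : ℂ := conj (ψ₁ 0) * φ₁ 0 + conj (ψ₁ 1) * φ₁ 1 with hadef
  set b : ℂ := conj (ψ₂ 0) * φ₁ 0 + conj (ψ₂ 1) * φ₁ 1 with hbdef
  have hcomp' : ∀ i, φ₁ i = a * ψ₁ i + b * ψ₂ i := by
    intro i
    have h0 := hcompl i 0
    have h1 := hcompl i 1
    rw [hadef, hbdef]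
    fin_cases i <;> norm_num at h0 h1 ⊢ <;>
      first
      | linear_combination (φ₁ 0) * h0 + (φ₁ 1) * h1
      | linear_combination -(φ₁ 0) * h0 - (φ₁ 1) * h1
  have hφfun : φ₁ = fun i => a * ψ₁ i + b * ψ₂ i := funext hcomp'
  -- action of ρ on basis combos
  have hmulgen : ∀ (x y : ℂ) (i : Fin 2),
      ρ.mulVec (fun j => x * ψ₁ j + y * ψ₂ j) i = μ₁ * x * ψ₁ i + μ₂ * y * ψ₂ i := by
    intro x y i
    rw [hdec]
    simp only [Matrix.mulVec, dotProduct, Matrix.add_apply, Matrix.smul_apply,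
      Matrix.vecMulVec_apply, Fin.sum_univ_two, Pi.star_apply, Complex.star_def,
      smul_eq_mul, Pi.add_apply]
    linear_combination (μ₁ : ℂ) * ψ₁ i * x * e1 + (μ₂ : ℂ) * ψ₂ i * y * e2
      + (μ₁ : ℂ) * ψ₁ i * y * e3 + (μ₂ : ℂ) * ψ₂ i * x * e4
  have ha : a ≠ 0 := by
    intro h0
    exact hφ₁ne ⟨(μ₂ : ℂ), funext fun i => by
      rw [hφfun, hmulgen a b i]
      simp only [Pi.smul_apply, smul_eq_mul]
      linear_combination ((μ₁ : ℂ) - μ₂) * ψ₁ i * h0⟩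
  have hb : b ≠ 0 := by
    intro h0
    exact hφ₁ne ⟨(μ₁ : ℂ), funext fun i => by
      rw [hφfun, hmulgen a b i]
      simp only [Pi.smul_apply, smul_eq_mul]
      linear_combination ((μ₂ : ℂ) - μ₁) * ψ₂ i * h0⟩
  -- trace one
  have hsumc : (μ₁ : ℂ) + μ₂ = 1 := by
    have h := hρ.2
    rw [hdec] at h
    simp only [Matrix.trace, Matrix.diag, Matrix.add_apply, Matrix.smul_apply,
      Matrix.vecMulVec_apply, Fin.sum_univ_two, Pi.star_apply, Complex.star_def,
      smul_eq_mul] at h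
    linear_combination h - (μ₁ : ℂ) * e1 - (μ₂ : ℂ) * e2
  have hsumr : μ₁ + μ₂ = 1 := by exact_mod_cast hsumc
  -- norms
  set na : ℝ := Complex.normSq a with hnadef
  set nb : ℝ := Complex.normSq b with hnbdef
  have hna : (na : ℂ) = a * conj a := (Complex.mul_conj a).symm
  have hnb : (nb : ℂ) = b * conj b := (Complex.mul_conj b).symm
  have hnapos : 0 < na := Complex.normSq_pos.mpr ha
  have hnbpos : 0 < nb := Complex.normSq_pos.mpr hb
  have hab1 : na + nb = 1 := by
    have h := hφ₁
    rw [hφfun] at h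
    simp only [dotProduct, Fin.sum_univ_two, Pi.star_apply, Complex.star_def,
      map_add, _root_.map_mul] at h
    have hc : (na : ℂ) + nb = 1 := by
      linear_combination h + hna + hnb - (conj a * a) * e1 - (conj b * b) * e2
        - (conj a * b) * e3 - (conj b * a) * e4
    exact_mod_cast hc
  -- the real coefficients
  set D : ℝ := μ₂ * na + μ₁ * nb with hDdef
  have hDpos : 0 < D := add_pos (mul_pos hμ₂ hnapos) (mul_pos hμ₁pos hnbpos)
  set ν₁ : ℝ := μ₁ * μ₂ / D with hν₁def
  have hν₁pos : 0 < ν₁ := div_pos (mul_pos hμ₁pos hμ₂) hDpos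
  have hν₁D : ν₁ * D = μ₁ * μ₂ := div_mul_cancel₀ _ hDpos.ne'
  have hν₁lt : ν₁ < μ₁ := by
    rw [hν₁def, div_lt_iff₀ hDpos, hDdef]
    have h0 : μ₁ * μ₂ * na + μ₁ * μ₂ * nb = μ₁ * μ₂ := by
      linear_combination (μ₁ * μ₂) * hab1
    nlinarith [h0, mul_pos (mul_pos hμ₁pos (sub_pos.mpr hμ)) hnbpos]
  set s : ℝ := μ₁ - ν₁ * na with hsdef
  have hspos : 0 < s := by
    rw [hsdef]
    nlinarith [mul_pos hν₁pos hnbpos, hν₁lt, hab1]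
  set ν₂ : ℝ := 1 - ν₁ with hν₂def
  have hν₂pos : 0 < ν₂ := by
    rw [hν₂def]
    nlinarith [hν₁lt, hsumr, hμ₂]
  -- the complex coefficients
  set c : ℂ := ((Real.sqrt s : ℝ) : ℂ) with hcdef
  have hc0 : c ≠ 0 := by
    rw [hcdef]
    exact_mod_cast Complex.ofReal_ne_zero.mpr (Real.sqrt_pos.mpr hspos).ne'
  have hcc : c * c = (s : ℂ) := by
    rw [hcdef, ← Complex.ofReal_mul, Real.mul_self_sqrt hspos.le]
  have hconjc : conj c = c := by rw [hcdef]; exact Complex.conj_ofReal _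
  set d : ℂ := -(ν₁ : ℂ) * conj a * b * c⁻¹ with hddef
  set d' : ℂ := -(ν₁ : ℂ) * a * conj b * c⁻¹ with hd'def
  have hconjd : conj d = d' := by
    rw [hddef, hd'def]
    simp only [map_neg, _root_.map_mul, map_inv₀, Complex.conj_conj, hconjc,
      Complex.conj_ofReal]
  set t : ℝ := Real.sqrt ν₂ with htdef
  have ht0 : ((t : ℂ)) ≠ 0 := by
    rw [htdef]
    exact_mod_cast Complex.ofReal_ne_zero.mpr (Real.sqrt_pos.mpr hν₂pos).ne'
  have htt : (t : ℂ) * (t : ℂ) = (ν₂ : ℂ) := by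
    rw [htdef, ← Complex.ofReal_mul, Real.mul_self_sqrt hν₂pos.le]
  -- key scalar identities
  have hsC : c * c = (μ₁ : ℂ) - (ν₁ : ℂ) * (a * conj a) := by
    rw [hcc, hsdef]
    push_cast
    rw [hna]
  have hν₁Dc : (ν₁ : ℂ) * ((μ₂ : ℂ) * (a * conj a) + (μ₁ : ℂ) * (b * conj b)) = (μ₁ : ℂ) * μ₂ := by
    have h := congrArg (fun x : ℝ => (x : ℂ)) hν₁D
    simp only [hDdef] at h
    push_cast at h
    rw [hna, hnb] at h
    linear_combination h
  have h11 : (μ₁ : ℂ) = (ν₁ : ℂ) * (a * conj a) + c * c := by linear_combination -hsC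
  have hdd : d * d' * (c * c) = (ν₁ : ℂ) ^ 2 * (a * conj a) * (b * conj b) := by
    rw [hddef, hd'def]
    field_simp
  have h22 : (μ₂ : ℂ) = (ν₁ : ℂ) * (b * conj b) + d * d' := by
    have h22' : (μ₂ : ℂ) * (c * c) = ((ν₁ : ℂ) * (b * conj b) + d * d') * (c * c) := by
      linear_combination ((μ₂ : ℂ) - (ν₁ : ℂ) * (b * conj b)) * hsC - hdd - hν₁Dc
    exact (mul_right_cancel₀ (mul_ne_zero hc0 hc0) h22'.symm).symm
  have h12 : (0 : ℂ) = (ν₁ : ℂ) * (a * conj b) + c * d' := by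
    rw [hd'def]
    field_simp
    ring
  have h21 : (0 : ℂ) = (ν₁ : ℂ) * (b * conj a) + d * c := by
    rw [hddef]
    field_simp
    ring
  have key : ∀ u1 u2 v1 v2 : ℂ,
      (μ₁ : ℂ) * (u1 * v1) + (μ₂ : ℂ) * (u2 * v2) =
        (ν₁ : ℂ) * ((a * u1 + b * u2) * (conj a * v1 + conj b * v2))
          + (c * u1 + d * u2) * (c * v1 + d' * v2) := by
    intro u1 u2 v1 v2
    linear_combination (u1 * v1) * h11 + (u2 * v2) * h22 + (u1 * v2) * h12 + (u2 * v1) * h21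
  have htinv : (t : ℂ) * ((t : ℂ))⁻¹ = 1 := mul_inv_cancel₀ ht0
  have hνt : (ν₂ : ℂ) * (((t : ℂ))⁻¹ * ((t : ℂ))⁻¹) = 1 := by
    rw [← htt]; field_simp
  set φ₂ : Fin 2 → ℂ := fun i => (((t : ℂ))⁻¹ * c) * ψ₁ i + (((t : ℂ))⁻¹ * d) * ψ₂ i
    with hφ₂def
  refine ⟨ν₁, ν₂, φ₂, hν₁pos, hν₂pos, ?_, ?_, ?_, ?_⟩
  · -- unit vector
    have hnorm : (((t : ℂ))⁻¹ * c) * (((t : ℂ))⁻¹ * c)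
        + (((t : ℂ))⁻¹ * d') * (((t : ℂ))⁻¹ * d) = 1 := by
      have hcd : c * c + d * d' = (ν₂ : ℂ) := by
        have habℂ : a * conj a + b * conj b = 1 := by
          have : ((na : ℝ) : ℂ) + nb = 1 := by exact_mod_cast hab1
          rw [hna, hnb] at this; exact this
        have hν₂c : (ν₂ : ℂ) = 1 - ν₁ := by rw [hν₂def]; push_cast; ring
        linear_combination -h11 - h22 + hsumc - hν₂c - (ν₁ : ℂ) * habℂ
      linear_combination (((t : ℂ))⁻¹ * ((t : ℂ))⁻¹) * hcd + hνt
    simp only [dotProduct, Fin.sum_univ_two, hφ₂def, Pi.star_apply, Complex.star_def,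
      map_add, _root_.map_mul, map_inv₀, Complex.conj_ofReal, hconjc, hconjd]
    linear_combination ((((t : ℂ))⁻¹ * c) * (((t : ℂ))⁻¹ * c)) * e1
      + ((((t : ℂ))⁻¹ * d') * (((t : ℂ))⁻¹ * d)) * e2
      + ((((t : ℂ))⁻¹ * c) * (((t : ℂ))⁻¹ * d)) * e3
      + ((((t : ℂ))⁻¹ * d') * (((t : ℂ))⁻¹ * c)) * e4 + hnorm
  · -- decomposition
    rw [hdec]
    ext i j
    simp only [Matrix.add_apply, Matrix.smul_apply, Matrix.vecMulVec_apply, Pi.star_apply,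
      Complex.star_def, smul_eq_mul, hφ₂def]
    rw [hcomp' i, hcomp' j]
    simp only [map_add, _root_.map_mul, map_inv₀, Complex.conj_ofReal, hconjc, hconjd]
    linear_combination key (ψ₁ i) (ψ₂ i) (conj (ψ₁ j)) (conj (ψ₂ j))
      - ((c * ψ₁ i + d * ψ₂ i) * (c * conj (ψ₁ j) + d' * conj (ψ₂ j))) * hνt
  · -- not proportional to φ₁
    rintro ⟨k, hk⟩
    have h0 := congrFun hk 0
    have h1 := congrFun hk 1
    simp only [hφ₂def, Pi.smul_apply, smul_eq_mul] at h0 h1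
    rw [hcomp' 0] at h0
    rw [hcomp' 1] at h1
    have E1 : ((t : ℂ))⁻¹ * c = k * a := by
      linear_combination (conj (ψ₁ 0)) * h0 + (conj (ψ₁ 1)) * h1
        - (((t : ℂ))⁻¹ * c - k * a) * e1 - (((t : ℂ))⁻¹ * d - k * b) * e3
    have E2 : ((t : ℂ))⁻¹ * d = k * b := by
      linear_combination (conj (ψ₂ 0)) * h0 + (conj (ψ₂ 1)) * h1
        - (((t : ℂ))⁻¹ * c - k * a) * e4 - (((t : ℂ))⁻¹ * d - k * b) * e2
    have hcbda : c * b = d * a := by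
      linear_combination (t : ℂ) * b * E1 - (t : ℂ) * a * E2 - (c * b - d * a) * htinv
    have hb0 : (μ₁ : ℂ) * b = 0 := by
      linear_combination c * hcbda - b * hsC - a * h21
    rcases mul_eq_zero.mp hb0 with h | h
    · exact (Complex.ofReal_ne_zero.mpr hμ₁pos.ne') h
    · exact hb h
  · -- not an eigenvector
    rintro ⟨k, hk⟩
    have hd0 : d ≠ 0 := by
      rw [hddef]
      refine mul_ne_zero (mul_ne_zero (mul_ne_zero ?_ ?_) hb) (inv_ne_zero hc0)
      · simpa using Complex.ofReal_ne_zero.mpr hν₁pos.ne'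
      · simpa using ha
    have h0 := congrFun hk 0
    have h1 := congrFun hk 1
    rw [hφ₂def] at h0 h1
    rw [hmulgen _ _ 0] at h0
    rw [hmulgen _ _ 1] at h1
    simp only [Pi.smul_apply, smul_eq_mul] at h0 h1
    have G1 : (μ₁ : ℂ) * (((t : ℂ))⁻¹ * c) = k * (((t : ℂ))⁻¹ * c) := by
      linear_combination (conj (ψ₁ 0)) * h0 + (conj (ψ₁ 1)) * h1
        - ((μ₁ : ℂ) * (((t : ℂ))⁻¹ * c) - k * (((t : ℂ))⁻¹ * c)) * e1
        - ((μ₂ : ℂ) * (((t : ℂ))⁻¹ * d) - k * (((t : ℂ))⁻¹ * d)) * e3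
    have G2 : (μ₂ : ℂ) * (((t : ℂ))⁻¹ * d) = k * (((t : ℂ))⁻¹ * d) := by
      linear_combination (conj (ψ₂ 0)) * h0 + (conj (ψ₂ 1)) * h1
        - ((μ₁ : ℂ) * (((t : ℂ))⁻¹ * c) - k * (((t : ℂ))⁻¹ * c)) * e4
        - ((μ₂ : ℂ) * (((t : ℂ))⁻¹ * d) - k * (((t : ℂ))⁻¹ * d)) * e2
    have hk1 : (μ₁ : ℂ) = k :=
      mul_right_cancel₀ (mul_ne_zero (inv_ne_zero ht0) hc0) G1
    have hk2 : (μ₂ : ℂ) = k :=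
      mul_right_cancel₀ (mul_ne_zero (inv_ne_zero ht0) hd0) G2
    have : μ₁ = μ₂ := by exact_mod_cast hk1.trans hk2.symm
    exact (ne_of_gt hμ) this
end
end

section
/- There exist a compatible pair of separable density matrices ρ₁₂ on ℂ²⊗ℂ² and ρ₂₃ on ℂ²⊗ℂ² (i.e. Tr₁ ρ₁₂ = Tr₃ ρ₂₃) which admit no common extension: no density matrix ρ₁₂₃ on ℂ²⊗ℂ²⊗ℂ² satisfies Tr₃ ρ₁₂₃ = ρ₁₂ and Tr₁ ρ₁₂₃ = ρ₂₃. -/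
open Matrix Kronecker BigOperators
open scoped ComplexOrder
noncomputable section

/-- A bipartite density matrix is separable if it is a convex combination of products of
density matrices. -/
def SeparableState {A B : Type*} [Fintype A] [Fintype B]
    (ρ : Matrix (A × B) (A × B) ℂ) : Prop :=
  ∃ (n : ℕ) (lam : Fin n → ℝ) (σ : Fin n → Matrix A A ℂ) (τ : Fin n → Matrix B B ℂ),
    (∀ j, 0 ≤ lam j) ∧ (∑ j, lam j = 1) ∧
    (∀ j, IsDensityMatrix (σ j)) ∧ (∀ j, IsDensityMatrix (τ j)) ∧
    ρ = ∑ j, (lam j : ℂ) • (σ j ⊗ₖ τ j)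

namespace S10
def E0 : Matrix (Fin 2) (Fin 2) ℂ := !![1,0;0,0]
def E1 : Matrix (Fin 2) (Fin 2) ℂ := !![0,0;0,1]
def Pp : Matrix (Fin 2) (Fin 2) ℂ := !![1/2,1/2;1/2,1/2]
def Pm : Matrix (Fin 2) (Fin 2) ℂ := !![1/2,-1/2;-1/2,1/2]
def Zm : Matrix (Fin 2) (Fin 2) ℂ := !![1,0;0,-1]
def Xm : Matrix (Fin 2) (Fin 2) ℂ := !![0,1;1,0]

lemma psd_of_proj {n : Type*} [Fintype n] (M : Matrix n n ℂ) (hH : Mᴴ = M)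
    (hsq : M * M = M) : M.PosSemidef := by
  have := posSemidef_conjTranspose_mul_self M
  rwa [hH, hsq] at this

lemma psd_smul {n : Type*} [Fintype n] {M : Matrix n n ℂ} (h : M.PosSemidef)
    {c : ℝ} (hc : 0 ≤ c) : ((c : ℂ) • M).PosSemidef := by
  constructor
  · unfold Matrix.IsHermitian
    rw [conjTranspose_smul, h.1]
    simp
  · exact (h.smul (by exact_mod_cast hc : (0:ℂ) ≤ (c:ℂ))).2

lemma E0_density : IsDensityMatrix E0 := by
  constructor
  · refine psd_of_proj _ ?_ ?_ <;>
    · ext i j; fin_cases i <;> fin_cases j <;>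
        simp [E0, Matrix.mul_apply, Fin.sum_univ_two]
  · simp [Matrix.trace, E0, Fin.sum_univ_two]

lemma E1_density : IsDensityMatrix E1 := by
  constructor
  · refine psd_of_proj _ ?_ ?_ <;>
    · ext i j; fin_cases i <;> fin_cases j <;>
        simp [E1, Matrix.mul_apply, Fin.sum_univ_two]
  · simp [Matrix.trace, E1, Fin.sum_univ_two]

lemma Pp_density : IsDensityMatrix Pp := by
  constructor
  · refine psd_of_proj _ ?_ ?_ <;>
    · ext i j; fin_cases i <;> fin_cases j <;>
        simp [Pp, Matrix.mul_apply, Fin.sum_univ_two] <;> norm_num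
  · simp [Matrix.trace, Pp, Fin.sum_univ_two]; norm_num

lemma Pm_density : IsDensityMatrix Pm := by
  constructor
  · refine psd_of_proj _ ?_ ?_ <;>
    · ext i j; fin_cases i <;> fin_cases j <;>
        simp [Pm, Matrix.mul_apply, Fin.sum_univ_two] <;> norm_num
  · simp [Matrix.trace, Pm, Fin.sum_univ_two]; norm_num

def ρ₁₂ : Matrix (Fin 2 × Fin 2) (Fin 2 × Fin 2) ℂ :=
  ((1/2 : ℝ) : ℂ) • (E0 ⊗ₖ E0 + E1 ⊗ₖ E1)
def ρ₂₃ : Matrix (Fin 2 × Fin 2) (Fin 2 × Fin 2) ℂ :=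
  ((1/2 : ℝ) : ℂ) • (Pp ⊗ₖ Pp + Pm ⊗ₖ Pm)

open scoped MatrixOrder in
lemma _root_.Matrix.posSemidef_iff_eq_transpose_mul_self {n : Type*} [Fintype n]
    {A : Matrix n n ℂ} : A.PosSemidef ↔ ∃ B : Matrix n n ℂ, A = Bᴴ * B := by
  classical
  exact ⟨fun h => by
    obtain ⟨B, hB⟩ := CStarAlgebra.nonneg_iff_eq_star_mul_self.mp h.nonneg
    exact ⟨B, hB⟩, fun ⟨B, hB⟩ => hB ▸ posSemidef_conjTranspose_mul_self B⟩

lemma kron_density {A B : Type*} [Fintype A] [Fintype B]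
    {σ : Matrix A A ℂ} {τ : Matrix B B ℂ}
    (hσ : IsDensityMatrix σ) (hτ : IsDensityMatrix τ) : IsDensityMatrix (σ ⊗ₖ τ) := by
  constructor
  · obtain ⟨P, hP⟩ := (Matrix.posSemidef_iff_eq_transpose_mul_self).mp hσ.1
    obtain ⟨Q, hQ⟩ := (Matrix.posSemidef_iff_eq_transpose_mul_self).mp hτ.1
    have : σ ⊗ₖ τ = (P ⊗ₖ Q)ᴴ * (P ⊗ₖ Q) := by
      have hk : (P ⊗ₖ Q)ᴴ = Pᴴ ⊗ₖ Qᴴ := by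
        ext ⟨i,j⟩ ⟨k,l⟩
        simp [Matrix.conjTranspose_apply, Matrix.kroneckerMap_apply, mul_comm]
      rw [hk, ← Matrix.mul_kronecker_mul, ← hP, ← hQ]
    rw [this]
    exact posSemidef_conjTranspose_mul_self _
  · rw [Matrix.trace_kronecker, hσ.2, hτ.2, mul_one]

lemma ρ₁₂_density : IsDensityMatrix ρ₁₂ := by
  constructor
  · rw [ρ₁₂]
    exact psd_smul (((kron_density E0_density E0_density).1).add
      ((kron_density E1_density E1_density).1)) (by norm_num : (0:ℝ) ≤ 1/2)
  · rw [ρ₁₂, Matrix.trace_smul, Matrix.trace_add,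
      (kron_density E0_density E0_density).2, (kron_density E1_density E1_density).2]
    norm_num

lemma ρ₂₃_density : IsDensityMatrix ρ₂₃ := by
  constructor
  · rw [ρ₂₃]
    exact psd_smul (((kron_density Pp_density Pp_density).1).add
      ((kron_density Pm_density Pm_density).1)) (by norm_num : (0:ℝ) ≤ 1/2)
  · rw [ρ₂₃, Matrix.trace_smul, Matrix.trace_add,
      (kron_density Pp_density Pp_density).2, (kron_density Pm_density Pm_density).2]
    norm_num


lemma kron_conjT {A B C D : Type*} [Fintype A] [Fintype C]
    (P : Matrix A B ℂ) (Q : Matrix C D ℂ) : (P ⊗ₖ Q)ᴴ = Pᴴ ⊗ₖ Qᴴ := by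
  ext ⟨i,j⟩ ⟨k,l⟩
  simp [Matrix.conjTranspose_apply, Matrix.kroneckerMap_apply, mul_comm]

def Amat : Matrix ((Fin 2 × Fin 2) × Fin 2) ((Fin 2 × Fin 2) × Fin 2) ℂ :=
  (Zm ⊗ₖ Zm) ⊗ₖ (1 : Matrix (Fin 2) (Fin 2) ℂ)
def Bmat : Matrix ((Fin 2 × Fin 2) × Fin 2) ((Fin 2 × Fin 2) × Fin 2) ℂ :=
  ((1 : Matrix (Fin 2) (Fin 2) ℂ) ⊗ₖ Xm) ⊗ₖ Xm

lemma Zm_herm : Zmᴴ = Zm := by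
  ext i j; fin_cases i <;> fin_cases j <;> simp [Zm]
lemma Xm_herm : Xmᴴ = Xm := by
  ext i j; fin_cases i <;> fin_cases j <;> simp [Xm]
lemma Zm_sq : Zm * Zm = 1 := by
  ext i j; fin_cases i <;> fin_cases j <;>
    simp [Zm, Matrix.mul_apply, Fin.sum_univ_two, Matrix.one_apply]
lemma Xm_sq : Xm * Xm = 1 := by
  ext i j; fin_cases i <;> fin_cases j <;>
    simp [Xm, Matrix.mul_apply, Fin.sum_univ_two, Matrix.one_apply]

lemma Amat_herm : Amatᴴ = Amat := by
  rw [Amat, kron_conjT, kron_conjT, Zm_herm, Matrix.conjTranspose_one]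
lemma Bmat_herm : Bmatᴴ = Bmat := by
  rw [Bmat, kron_conjT, kron_conjT, Xm_herm, Matrix.conjTranspose_one]
lemma Amat_sq : Amat * Amat = 1 := by
  rw [Amat, ← Matrix.mul_kronecker_mul, ← Matrix.mul_kronecker_mul, Zm_sq, Matrix.one_mul,
    Matrix.one_kronecker_one, Matrix.one_kronecker_one]
lemma Bmat_sq : Bmat * Bmat = 1 := by
  rw [Bmat, ← Matrix.mul_kronecker_mul, ← Matrix.mul_kronecker_mul, Xm_sq, Matrix.one_mul,
    Matrix.one_kronecker_one, Matrix.one_kronecker_one]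

lemma hAB : Amat * Bmat = -(Bmat * Amat) := by
  have h1 : Amat * Bmat = (Zm ⊗ₖ (Zm * Xm)) ⊗ₖ Xm := by
    rw [Amat, Bmat, ← Matrix.mul_kronecker_mul, ← Matrix.mul_kronecker_mul,
      Matrix.mul_one, Matrix.one_mul]
  have h2 : Bmat * Amat = (Zm ⊗ₖ (Xm * Zm)) ⊗ₖ Xm := by
    rw [Amat, Bmat, ← Matrix.mul_kronecker_mul, ← Matrix.mul_kronecker_mul,
      Matrix.mul_one, Matrix.one_mul]
  have h3 : Zm * Xm = -(Xm * Zm) := by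
    ext i j
    fin_cases i <;> fin_cases j <;> simp [Zm, Xm, Matrix.mul_apply, Fin.sum_univ_two]
  rw [h1, h2, h3]
  ext ⟨⟨a,b⟩,c⟩ ⟨⟨d,e⟩,f⟩
  simp only [Matrix.kroneckerMap_apply, Matrix.neg_apply]
  ring

lemma psd_one_sub {n : Type*} [Fintype n] [DecidableEq n] (M : Matrix n n ℂ)
    (hH : Mᴴ = M) (hMM : M * M = 1) : (1 - M).PosSemidef := by
  set c : ℂ := (((Real.sqrt 2)⁻¹ : ℝ) : ℂ) with hc
  have hr : ((Real.sqrt 2)⁻¹ * (Real.sqrt 2)⁻¹ : ℝ) = 1/2 := by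
    rw [← mul_inv, Real.mul_self_sqrt (by norm_num : (0:ℝ) ≤ 2)]
    norm_num
  have hc2 : c * c = 1/2 := by
    rw [hc, ← Complex.ofReal_mul, hr]
    norm_num
  have hsub : (1 - M) * (1 - M) = (2:ℂ) • (1 - M) := by
    rw [sub_mul, mul_sub, mul_sub, hMM, Matrix.mul_one, Matrix.one_mul, Matrix.mul_one]
    rw [two_smul]
    abel
  have hN : (c • (1 - M))ᴴ * (c • (1 - M)) = 1 - M := by
    rw [Matrix.conjTranspose_smul, Matrix.conjTranspose_sub, Matrix.conjTranspose_one, hH,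
      Matrix.smul_mul, Matrix.mul_smul, hsub, smul_smul, smul_smul]
    have : star c = c := by rw [hc]; exact Complex.conj_ofReal _
    rw [this]
    rw [show (c * c * 2 : ℂ) = 1 by rw [hc2]; norm_num]
    rw [one_smul]
  rw [← hN]
  exact posSemidef_conjTranspose_mul_self _

lemma eq_zero_of_trace_CT {m n : Type*} [Fintype m] [Fintype n] [DecidableEq n]
    (A : Matrix m n ℂ) (h : (Aᴴ * A).trace = 0) : A = 0 := by
  have h2 : ((∑ j, ∑ i, Complex.normSq (A i j) : ℝ) : ℂ) = 0 := by
    rw [← h]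
    simp only [Matrix.trace, Matrix.diag, Matrix.mul_apply, Matrix.conjTranspose_apply]
    push_cast [Complex.normSq_eq_conj_mul_self]
    rfl
  have h' : ∑ j, ∑ i, Complex.normSq (A i j) = 0 := by exact_mod_cast h2
  have hz := (Finset.sum_eq_zero_iff_of_nonneg
    (fun j _ => Finset.sum_nonneg fun i _ => Complex.normSq_nonneg _)).mp h'
  ext i j
  have hij := (Finset.sum_eq_zero_iff_of_nonneg
    (fun i _ => Complex.normSq_nonneg _)).mp (hz j (Finset.mem_univ _)) i (Finset.mem_univ _)
  simpa using Complex.normSq_eq_zero.mp hij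

lemma mul_eq_zero_of_trace {n : Type*} [Fintype n] [DecidableEq n]
    {ρ S : Matrix n n ℂ} (hρ : ρ.PosSemidef) (hS : S.PosSemidef)
    (h : (ρ * S).trace = 0) : ρ * S = 0 := by
  obtain ⟨P, hP⟩ := Matrix.posSemidef_iff_eq_transpose_mul_self.mp hρ
  obtain ⟨Q, hQ⟩ := Matrix.posSemidef_iff_eq_transpose_mul_self.mp hS
  have h0 : P * Qᴴ = 0 := by
    apply eq_zero_of_trace_CT
    calc ((P * Qᴴ)ᴴ * (P * Qᴴ)).trace
        = (Q * ((Pᴴ * P) * Qᴴ)).trace := by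
          rw [Matrix.conjTranspose_mul, Matrix.conjTranspose_conjTranspose]
          simp only [Matrix.mul_assoc]
      _ = (((Pᴴ * P) * Qᴴ) * Q).trace := Matrix.trace_mul_comm _ _
      _ = (ρ * S).trace := by rw [Matrix.mul_assoc, ← hQ, ← hP]
      _ = 0 := h
  rw [hP, hQ, Matrix.mul_assoc, ← Matrix.mul_assoc P, h0]
  simp


lemma ρ₁₂_sep : SeparableState ρ₁₂ := by
  refine ⟨2, ![1/2, 1/2], ![E0, E1], ![E0, E1], ?_, ?_, ?_, ?_, ?_⟩
  · intro j; fin_cases j <;> norm_num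
  · simp [Fin.sum_univ_two]; norm_num
  · intro j; fin_cases j <;> [exact E0_density; exact E1_density]
  · intro j; fin_cases j <;> [exact E0_density; exact E1_density]
  · ext x y
    simp [Fin.sum_univ_two, ρ₁₂, Matrix.smul_apply, Matrix.add_apply]
    ring

lemma ρ₂₃_sep : SeparableState ρ₂₃ := by
  refine ⟨2, ![1/2, 1/2], ![Pp, Pm], ![Pp, Pm], ?_, ?_, ?_, ?_, ?_⟩
  · intro j; fin_cases j <;> norm_num
  · simp [Fin.sum_univ_two]; norm_num
  · intro j; fin_cases j <;> [exact Pp_density; exact Pm_density]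
  · intro j; fin_cases j <;> [exact Pp_density; exact Pm_density]
  · ext x y
    simp [Fin.sum_univ_two, ρ₂₃, Matrix.smul_apply, Matrix.add_apply]
    ring

lemma marg : ptraceLeft ρ₁₂ = ptraceRight ρ₂₃ := by
  ext i j
  fin_cases i <;> fin_cases j <;>
    simp [ptraceLeft, ptraceRight, ρ₁₂, ρ₂₃, E0, E1, Pp, Pm, Fin.sum_univ_two,
      Matrix.kroneckerMap_apply] <;> norm_num

lemma no_ext : ¬ ∃ ρ : Matrix ((Fin 2 × Fin 2) × Fin 2) ((Fin 2 × Fin 2) × Fin 2) ℂ,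
    IsDensityMatrix ρ ∧ ptraceRight ρ = ρ₁₂ ∧ ptrace1of3 ρ = ρ₂₃ := by
  rintro ⟨ρ, ⟨hpos, htr⟩, hR, hL⟩
  have key12 : ∀ p q : Fin 2 × Fin 2, ∑ c, ρ (p, c) (q, c) = ρ₁₂ p q := by
    intro p q
    have := congrFun (congrFun hR p) q
    simpa [ptraceRight] using this
  have key23 : ∀ b c e f : Fin 2, ∑ a, ρ ((a, b), c) ((a, e), f) = ρ₂₃ (b, c) (e, f) := by
    intro b c e f
    have := congrFun (congrFun hL (b, c)) (e, f)
    simpa [ptrace1of3] using this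
  have trA : (ρ * Amat).trace = 1 := by
    have k1 := key12 (0,0) (0,0)
    have k2 := key12 (0,1) (0,1)
    have k3 := key12 (1,0) (1,0)
    have k4 := key12 (1,1) (1,1)
    simp [ρ₁₂, E0, E1, Fin.sum_univ_two, Matrix.kroneckerMap_apply] at k1 k2 k3 k4
    simp [Matrix.trace, Matrix.diag, Matrix.mul_apply, Amat, Zm, Fintype.sum_prod_type,
      Fin.sum_univ_two, Matrix.kroneckerMap_apply, Matrix.one_apply]
    linear_combination k1 - k2 - k3 + k4
  have trB : (ρ * Bmat).trace = 1 := by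
    have k1 := key23 0 0 1 1
    have k2 := key23 0 1 1 0
    have k3 := key23 1 0 0 1
    have k4 := key23 1 1 0 0
    simp [ρ₂₃, Pp, Pm, Fin.sum_univ_two, Matrix.kroneckerMap_apply] at k1 k2 k3 k4
    simp [Matrix.trace, Matrix.diag, Matrix.mul_apply, Bmat, Xm, Fintype.sum_prod_type,
      Fin.sum_univ_two, Matrix.kroneckerMap_apply, Matrix.one_apply]
    linear_combination k1 + k2 + k3 + k4
  have eA : ρ * Amat = ρ := by
    have t1 : (ρ * (1 - Amat)).trace = 0 := by
      rw [Matrix.mul_sub, Matrix.mul_one, Matrix.trace_sub, htr, trA, sub_self]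
    have z1 := mul_eq_zero_of_trace hpos (psd_one_sub Amat Amat_herm Amat_sq) t1
    rw [Matrix.mul_sub, Matrix.mul_one, sub_eq_zero] at z1
    exact z1.symm
  have eB : ρ * Bmat = ρ := by
    have t1 : (ρ * (1 - Bmat)).trace = 0 := by
      rw [Matrix.mul_sub, Matrix.mul_one, Matrix.trace_sub, htr, trB, sub_self]
    have z1 := mul_eq_zero_of_trace hpos (psd_one_sub Bmat Bmat_herm Bmat_sq) t1
    rw [Matrix.mul_sub, Matrix.mul_one, sub_eq_zero] at z1
    exact z1.symm
  have hneg : ρ = -ρ := by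
    conv_lhs => rw [← eB, ← eA, Matrix.mul_assoc, hAB, Matrix.mul_neg, ← Matrix.mul_assoc,
      eB, eA]
  have hzero : ρ = 0 := by
    have h2 : ρ + ρ = 0 := by nth_rewrite 2 [hneg]; simp
    rw [show ρ + ρ = (2:ℂ) • ρ from (two_smul ℂ ρ).symm] at h2
    exact (smul_eq_zero.mp h2).resolve_left (by norm_num)
  rw [hzero] at htr
  simp [Matrix.trace] at htr

end S10

/-- There is a compatible pair of separable density matrices on ℂ²⊗ℂ² with no common
extension. -/
theorem stmt10 :
    ∃ (ρ₁₂ ρ₂₃ : Matrix (Fin 2 × Fin 2) (Fin 2 × Fin 2) ℂ),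
      IsDensityMatrix ρ₁₂ ∧ IsDensityMatrix ρ₂₃ ∧
      SeparableState ρ₁₂ ∧ SeparableState ρ₂₃ ∧
      ptraceLeft ρ₁₂ = ptraceRight ρ₂₃ ∧
      ¬ ∃ ρ₁₂₃ : Matrix ((Fin 2 × Fin 2) × Fin 2) ((Fin 2 × Fin 2) × Fin 2) ℂ,
        IsDensityMatrix ρ₁₂₃ ∧ ptraceRight ρ₁₂₃ = ρ₁₂ ∧ ptrace1of3 ρ₁₂₃ = ρ₂₃ :=
  ⟨S10.ρ₁₂, S10.ρ₂₃, S10.ρ₁₂_density, S10.ρ₂₃_density, S10.ρ₁₂_sep, S10.ρ₂₃_sep,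
    S10.marg, S10.no_ext⟩
end
end

section
/- Classical maximum-entropy extension: with the notation of the classical extension formula, for any probability density σ on X×Y×Z with marginals ∑_z σ = ρ₁₂ and ∑ₓ σ = ρ₂₃, the Shannon entropy satisfies H(σ) ≤ H(ρ₁₂) + H(ρ₂₃) − H(ρ₂), and equality holds for σ = ρ₁₂₃ defined by ρ₁₂₃(x,y,z) = ρ₁₂(x,y)ρ₂₃(y,z)/ρ₂(y). -/
open Matrix Kronecker BigOperators
open scoped ComplexOrder
noncomputable section

/-- Shannon entropy of a finitely supported density. -/
lemma gibbs {ι : Type*} [Fintype ι] (a b : ι → ℝ) (ha : ∀ i, 0 ≤ a i)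
    (hb : ∀ i, 0 ≤ b i) (hpos : ∀ i, 0 < a i → 0 < b i)
    (hs : ∑ i, b i ≤ ∑ i, a i) :
    ∑ i, a i * Real.log (b i) ≤ ∑ i, a i * Real.log (a i) := by
  have key : ∀ i, a i * Real.log (b i) - a i * Real.log (a i) ≤ b i - a i := by
    intro i
    rcases (ha i).eq_or_lt with h | h
    · simp [← h, hb i]
    · have hbi := hpos i h
      have hlog : Real.log (b i / a i) ≤ b i / a i - 1 :=
        Real.log_le_sub_one_of_pos (div_pos hbi h)
      have := mul_le_mul_of_nonneg_left hlog (le_of_lt h)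
      rw [Real.log_div hbi.ne' h.ne'] at this
      calc a i * Real.log (b i) - a i * Real.log (a i)
          = a i * (Real.log (b i) - Real.log (a i)) := by ring
        _ ≤ a i * (b i / a i - 1) := this
        _ = b i - a i := by field_simp
  have h2 : ∑ i, (a i * Real.log (b i) - a i * Real.log (a i)) ≤ ∑ i, (b i - a i) :=
    Finset.sum_le_sum fun i _ => key i
  rw [Finset.sum_sub_distrib, Finset.sum_sub_distrib] at h2
  linarith

lemma keySum {X Y Z : Type*} [Fintype X] [Fintype Y] [Fintype Z]
    (ρ₁₂ : X × Y → ℝ) (ρ₂₃ : Y × Z → ℝ)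
    (h12n : ∀ p, 0 ≤ ρ₁₂ p) (h23n : ∀ p, 0 ≤ ρ₂₃ p)
    (ρ₂ : Y → ℝ) (hρ₂ : ρ₂ = fun y => ∑ x, ρ₁₂ (x, y))
    (ρ₁₂₃ : X × Y × Z → ℝ)
    (hdef : ρ₁₂₃ = fun p =>
      if 0 < ρ₂ p.2.1 then ρ₁₂ (p.1, p.2.1) * ρ₂₃ (p.2.1, p.2.2) / ρ₂ p.2.1 else 0)
    (σ : X × Y × Z → ℝ) (hσn : ∀ p, 0 ≤ σ p)
    (h1 : ∀ x y, ∑ z, σ (x, y, z) = ρ₁₂ (x, y))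
    (h2 : ∀ y z, ∑ x, σ (x, y, z) = ρ₂₃ (y, z)) :
    ∑ p, σ p * Real.log (ρ₁₂₃ p) =
      (∑ q, ρ₁₂ q * Real.log (ρ₁₂ q)) + (∑ q, ρ₂₃ q * Real.log (ρ₂₃ q))
        - ∑ y, ρ₂ y * Real.log (ρ₂ y) := by
  have step : ∀ p : X × Y × Z, σ p * Real.log (ρ₁₂₃ p) =
      σ p * Real.log (ρ₁₂ (p.1, p.2.1)) + σ p * Real.log (ρ₂₃ (p.2.1, p.2.2))
        - σ p * Real.log (ρ₂ p.2.1) := by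
    rintro ⟨x, y, z⟩
    rcases (hσn (x, y, z)).eq_or_lt with h | h
    · simp [← h]
    · have h12 : 0 < ρ₁₂ (x, y) := by
        rw [← h1 x y]
        exact lt_of_lt_of_le h (Finset.single_le_sum
          (fun i _ => hσn (x, y, i)) (Finset.mem_univ z))
      have h23 : 0 < ρ₂₃ (y, z) := by
        rw [← h2 y z]
        exact lt_of_lt_of_le h (Finset.single_le_sum
          (fun i _ => hσn (i, y, z)) (Finset.mem_univ x))
      have h2p : 0 < ρ₂ y := by
        rw [hρ₂]
        exact lt_of_lt_of_le h12 (Finset.single_le_sum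
          (fun i _ => h12n (i, y)) (Finset.mem_univ x))
      have : ρ₁₂₃ (x, y, z) = ρ₁₂ (x, y) * ρ₂₃ (y, z) / ρ₂ y := by
        rw [hdef]; simp [h2p]
      rw [this, Real.log_div (by positivity) h2p.ne',
        Real.log_mul h12.ne' h23.ne']
      ring
  calc ∑ p, σ p * Real.log (ρ₁₂₃ p)
      = ∑ p : X × Y × Z, (σ p * Real.log (ρ₁₂ (p.1, p.2.1))
          + σ p * Real.log (ρ₂₃ (p.2.1, p.2.2)) - σ p * Real.log (ρ₂ p.2.1)) :=
        Finset.sum_congr rfl (fun p _ => step p)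
    _ = (∑ q, ρ₁₂ q * Real.log (ρ₁₂ q)) + (∑ q, ρ₂₃ q * Real.log (ρ₂₃ q))
        - ∑ y, ρ₂ y * Real.log (ρ₂ y) := by
        rw [Finset.sum_sub_distrib, Finset.sum_add_distrib]
        congr 1
        congr 1
        · rw [Fintype.sum_prod_type]
          simp only [Fintype.sum_prod_type]
          refine Finset.sum_congr rfl fun x _ => Finset.sum_congr rfl fun y _ => ?_
          rw [← Finset.sum_mul, h1]
        · rw [Fintype.sum_prod_type]
          simp only [Fintype.sum_prod_type]
          rw [Finset.sum_comm]
          refine Finset.sum_congr rfl fun y _ => ?_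
          rw [Finset.sum_comm]
          refine Finset.sum_congr rfl fun z _ => ?_
          rw [← Finset.sum_mul, h2]
        · rw [Fintype.sum_prod_type]
          simp only [Fintype.sum_prod_type]
          rw [Finset.sum_comm]
          refine Finset.sum_congr rfl fun y _ => ?_
          have : ∑ x, ∑ z, σ (x, y, z) * Real.log (ρ₂ y)
              = (∑ x, ∑ z, σ (x, y, z)) * Real.log (ρ₂ y) := by
            rw [Finset.sum_mul]
            exact Finset.sum_congr rfl fun x _ => (Finset.sum_mul _ _ _).symm
          rw [this]
          congr 1
          rw [hρ₂]
          exact Finset.sum_congr rfl fun x _ => h1 x y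

def shannon {ι : Type*} [Fintype ι] (p : ι → ℝ) : ℝ := -∑ i, p i * Real.log (p i)

/-- Any extension σ of ρ₁₂ and ρ₂₃ satisfies H(σ) ≤ H(ρ₁₂) + H(ρ₂₃) - H(ρ₂), with
equality for the classical conditional-product extension. -/
theorem stmt19 {X Y Z : Type*} [Fintype X] [Fintype Y] [Fintype Z]
    (ρ₁₂ : X × Y → ℝ) (ρ₂₃ : Y × Z → ℝ)
    (h12n : ∀ p, 0 ≤ ρ₁₂ p) (h23n : ∀ p, 0 ≤ ρ₂₃ p)
    (h12s : ∑ p, ρ₁₂ p = 1) (h23s : ∑ p, ρ₂₃ p = 1)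
    (hcomp : ∀ y, ∑ x, ρ₁₂ (x, y) = ∑ z, ρ₂₃ (y, z))
    (ρ₂ : Y → ℝ) (hρ₂ : ρ₂ = fun y => ∑ x, ρ₁₂ (x, y))
    (ρ₁₂₃ : X × Y × Z → ℝ)
    (hdef : ρ₁₂₃ = fun p =>
      if 0 < ρ₂ p.2.1 then ρ₁₂ (p.1, p.2.1) * ρ₂₃ (p.2.1, p.2.2) / ρ₂ p.2.1 else 0) :
    (∀ σ : X × Y × Z → ℝ, (∀ p, 0 ≤ σ p) → (∑ p, σ p = 1) →
      (∀ x y, ∑ z, σ (x, y, z) = ρ₁₂ (x, y)) →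
      (∀ y z, ∑ x, σ (x, y, z) = ρ₂₃ (y, z)) →
      shannon σ ≤ shannon ρ₁₂ + shannon ρ₂₃ - shannon ρ₂) ∧
    shannon ρ₁₂₃ = shannon ρ₁₂ + shannon ρ₂₃ - shannon ρ₂ := by
  have hρ₂' : ∀ y, ρ₂ y = ∑ x, ρ₁₂ (x, y) := fun y => by rw [hρ₂]
  have h2nonneg : ∀ y, 0 ≤ ρ₂ y := fun y => by
    rw [hρ₂']; exact Finset.sum_nonneg fun x _ => h12n _
  have h123n : ∀ p, 0 ≤ ρ₁₂₃ p := by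
    intro p; rw [hdef]; dsimp only
    split
    · exact div_nonneg (mul_nonneg (h12n _) (h23n _)) (le_of_lt ‹_›)
    · exact le_refl 0
  have hm1 : ∀ x y, ∑ z, ρ₁₂₃ (x, y, z) = ρ₁₂ (x, y) := by
    intro x y
    rcases lt_or_ge 0 (ρ₂ y) with h | h
    · rw [hdef]; dsimp only
      simp only [if_pos h]
      rw [← Finset.sum_div, ← Finset.mul_sum, ← hcomp y, ← hρ₂' y,
        mul_div_assoc, div_self h.ne', mul_one]
    · have h20 : ρ₂ y = 0 := le_antisymm h (h2nonneg y)
      have h120 : ρ₁₂ (x, y) = 0 := by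
        refine le_antisymm ?_ (h12n _)
        rw [← h20, hρ₂' y]
        exact Finset.single_le_sum (fun i _ => h12n (i, y)) (Finset.mem_univ x)
      rw [h120, hdef]
      simp [h20]
  have hm2 : ∀ y z, ∑ x, ρ₁₂₃ (x, y, z) = ρ₂₃ (y, z) := by
    intro y z
    rcases lt_or_ge 0 (ρ₂ y) with h | h
    · rw [hdef]; dsimp only
      simp only [if_pos h]
      rw [← Finset.sum_div, ← Finset.sum_mul, ← hρ₂' y,
        mul_comm, mul_div_assoc, div_self h.ne', mul_one]
    · have h20 : ρ₂ y = 0 := le_antisymm h (h2nonneg y)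
      have h230 : ρ₂₃ (y, z) = 0 := by
        refine le_antisymm ?_ (h23n _)
        rw [← h20, hρ₂' y, hcomp y]
        exact Finset.single_le_sum (fun i _ => h23n (y, i)) (Finset.mem_univ z)
      rw [h230, hdef]
      simp [h20]
  have hsum123 : ∑ p, ρ₁₂₃ p = 1 := by
    rw [Fintype.sum_prod_type]
    simp only [Fintype.sum_prod_type]
    simp only [hm1]
    rw [← Fintype.sum_prod_type, h12s]
  constructor
  · intro σ hσn hσs h1 h2
    have hpos : ∀ p, 0 < σ p → 0 < ρ₁₂₃ p := by
      rintro ⟨x, y, z⟩ h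
      have h12 : 0 < ρ₁₂ (x, y) := by
        rw [← h1 x y]
        exact lt_of_lt_of_le h (Finset.single_le_sum
          (fun i _ => hσn (x, y, i)) (Finset.mem_univ z))
      have h23 : 0 < ρ₂₃ (y, z) := by
        rw [← h2 y z]
        exact lt_of_lt_of_le h (Finset.single_le_sum
          (fun i _ => hσn (i, y, z)) (Finset.mem_univ x))
      have h2p : 0 < ρ₂ y := by
        rw [hρ₂' y]
        exact lt_of_lt_of_le h12 (Finset.single_le_sum
          (fun i _ => h12n (i, y)) (Finset.mem_univ x))
      rw [hdef]; dsimp only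
      rw [if_pos h2p]
      positivity
    have hg := gibbs σ ρ₁₂₃ hσn h123n hpos (by rw [hsum123, hσs])
    have hk := keySum ρ₁₂ ρ₂₃ h12n h23n ρ₂ hρ₂ ρ₁₂₃ hdef σ hσn h1 h2
    simp only [shannon]
    linarith
  · have hk := keySum ρ₁₂ ρ₂₃ h12n h23n ρ₂ hρ₂ ρ₁₂₃ hdef ρ₁₂₃ h123n hm1 hm2
    simp only [shannon]
    linarith
end
end
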